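/- Let α, β, γ be real numbers with Π = (1+α+β+γ)(1−α+β+γ)(1+α−β+γ)(1+α+β−γ)(1−α−β+γ)(1−α+β−γ)(1+α−β−γ)(1−α−β−γ) ≠ 0, let δ be a complex square root of −1/(4Π), and let U, V, W be as follows: U = −3α⁴+2(1+β²+γ²)α²+β⁴+γ⁴−2(β²+γ²+β²γ²)+1, V = −3β⁴+2(1+α²+γ²)β²+α⁴+γ⁴−2(α²+γ²+α²γ²)+1, W = −3γ⁴+2(1+α²+β²)γ²+α⁴+β⁴−2(α²+β²+α²β²)+1. Then (p,q,r) = (Uδ, Vδ, Wδ) is a solution of the system p² − α²(p+q+r)² = (α²−1)/4, q² − β²(p+q+r)² = (β²−1)/4, r² − γ²(p+q+r)² = (γ²−1)/4. -/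
import Mathlib


theorem stmt12 (α β γ Pi : ℝ)
    (hPi : Pi = (1+α+β+γ)*(1-α+β+γ)*(1+α-β+γ)*(1+α+β-γ)*
      (1-α-β+γ)*(1-α+β-γ)*(1+α-β-γ)*(1-α-β-γ))
    (hPine : Pi ≠ 0)
    (δ : ℂ) (hδ : δ^2 = -1/(4*(Pi:ℂ)))
    (U V W : ℝ)
    (hU : U = -3*α^4 + 2*(1+β^2+γ^2)*α^2 + β^4 + γ^4 - 2*(β^2+γ^2+β^2*γ^2) + 1)
    (hV : V = -3*β^4 + 2*(1+α^2+γ^2)*β^2 + α^4 + γ^4 - 2*(α^2+γ^2+α^2*γ^2) + 1)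
    (hW : W = -3*γ^4 + 2*(1+α^2+β^2)*γ^2 + α^4 + β^4 - 2*(α^2+β^2+α^2*β^2) + 1) :
    ((U:ℂ)*δ)^2 - (α:ℂ)^2*((U:ℂ)*δ + (V:ℂ)*δ + (W:ℂ)*δ)^2 = ((α:ℂ)^2 - 1)/4 ∧
    ((V:ℂ)*δ)^2 - (β:ℂ)^2*((U:ℂ)*δ + (V:ℂ)*δ + (W:ℂ)*δ)^2 = ((β:ℂ)^2 - 1)/4 ∧
    ((W:ℂ)*δ)^2 - (γ:ℂ)^2*((U:ℂ)*δ + (V:ℂ)*δ + (W:ℂ)*δ)^2 = ((γ:ℂ)^2 - 1)/4 := by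
  have hPiC : ((Pi:ℂ)) ≠ 0 := by exact_mod_cast hPine
  have ha : (U^2 - α^2*(U+V+W)^2 : ℝ) = (1-α^2)*Pi := by
    subst hU hV hW hPi; ring
  have hb : (V^2 - β^2*(U+V+W)^2 : ℝ) = (1-β^2)*Pi := by
    subst hU hV hW hPi; ring
  have hc : (W^2 - γ^2*(U+V+W)^2 : ℝ) = (1-γ^2)*Pi := by
    subst hU hV hW hPi; ring
  have key : ∀ (X t : ℝ), (X^2 - t^2*(U+V+W)^2 : ℝ) = (1-t^2)*Pi →
      ((X:ℂ)*δ)^2 - (t:ℂ)^2*((U:ℂ)*δ + (V:ℂ)*δ + (W:ℂ)*δ)^2 = ((t:ℂ)^2 - 1)/4 := by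
    intro X t h
    have h' : ((X:ℂ)^2 - (t:ℂ)^2*((U:ℂ)+(V:ℂ)+(W:ℂ))^2) = (1-(t:ℂ)^2)*(Pi:ℂ) := by
      exact_mod_cast congrArg (Complex.ofReal) h
    calc ((X:ℂ)*δ)^2 - (t:ℂ)^2*((U:ℂ)*δ + (V:ℂ)*δ + (W:ℂ)*δ)^2
        = ((X:ℂ)^2 - (t:ℂ)^2*((U:ℂ)+(V:ℂ)+(W:ℂ))^2) * δ^2 := by ring
      _ = (1-(t:ℂ)^2)*(Pi:ℂ) * (-1/(4*(Pi:ℂ))) := by rw [h', hδ]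
      _ = ((t:ℂ)^2 - 1)/4 := by field_simp; ring
  exact ⟨key U α ha, key V β hb, key W γ hc⟩
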